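/- arXiv:1802.03713 — 6 statements merged into one kernel-verified Lean document; each statement's English description precedes it below -/
import Mathlib

section
/- The structure matrix of a fully connected two-layer network (complete bipartite-through-hidden paths): for a network with d inputs, h hidden nodes, and K outputs, the d·K·h path vectors in {0,1}^{(d+K)h} (indicator vectors of the two edges each path uses), viewed over the rationals, span a subspace of dimension dh + Kh − h. Equivalently, the rank of the matrix whose columns are the path indicator vectors is m − H where m = (d+K)h is the number of weights and H = h is the number of hidden nodes. -/
/-- Edges of a fully connected network with `d` inputs, `h` hidden nodes and `K`
outputs: first-layer edges `(i,j)` and second-layer edges `(j,k)`. -/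
abbrev TwoLayerEdge (d h K : ℕ) := (Fin d × Fin h) ⊕ (Fin h × Fin K)

/-- The indicator vector of the path `(i, j, k)`: it has a `1` exactly in the
coordinates of the two edges `(i,j)` and `(j,k)` it uses. -/
def pathVec (d h K : ℕ) (p : Fin d × Fin h × Fin K) : TwoLayerEdge d h K → ℚ :=
  fun e =>
    if e = Sum.inl (p.1, p.2.1) ∨ e = Sum.inr (p.2.1, p.2.2) then 1 else 0

/-- The structure matrix: its columns are the path indicator vectors. -/
def structMatrix (d h K : ℕ) :
    Matrix (TwoLayerEdge d h K) (Fin d × Fin h × Fin K) ℚ :=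
  fun e p => pathVec d h K p e

/-- Auxiliary linear map whose kernel is exactly the span of the path vectors. -/
def hidMap (d h K : ℕ) : (TwoLayerEdge d h K → ℚ) →ₗ[ℚ] (Fin h → ℚ) where
  toFun w := fun j => (∑ i, w (Sum.inl (i, j))) - ∑ k, w (Sum.inr (j, k))
  map_add' x y := by
    funext j
    simp [Finset.sum_add_distrib]
    ring
  map_smul' c x := by
    funext j
    simp [Finset.mul_sum, mul_sub]

lemma hidMap_pathVec (d h K : ℕ) (p : Fin d × Fin h × Fin K) :
    hidMap d h K (pathVec d h K p) = 0 := by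
  obtain ⟨i0, j0, k0⟩ := p
  funext j
  by_cases hj : j = j0 <;>
    simp [hidMap, pathVec, Prod.ext_iff, hj, Finset.filter_eq', Finset.filter_and]

lemma ker_repr (d h K : ℕ) (w : TwoLayerEdge d h K → ℚ) (i0 : Fin d) (k0 : Fin K)
    (hker : ∀ j, (∑ i, w (Sum.inl (i, j))) = ∑ k, w (Sum.inr (j, k))) :
    w = (∑ i, ∑ j, w (Sum.inl (i, j)) • pathVec d h K (i, j, k0))
      + (∑ j, ∑ k, w (Sum.inr (j, k)) • pathVec d h K (i0, j, k))
      - ∑ j, (∑ i, w (Sum.inl (i, j))) • pathVec d h K (i0, j, k0) := by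
  funext e
  rcases e with ⟨a, b⟩ | ⟨b, c⟩ <;>
    simp [pathVec, Prod.ext_iff, Finset.sum_apply, Pi.add_apply, Pi.sub_apply,
      ite_and, Finset.sum_ite_eq, Finset.sum_ite_eq', mul_ite]
  by_cases hai : a = i0 <;> simp [hai, hker b]

lemma span_eq_ker (d h K : ℕ) (hd : 1 ≤ d) (hK : 1 ≤ K) :
    Submodule.span ℚ (Set.range (pathVec d h K)) = LinearMap.ker (hidMap d h K) := by
  apply le_antisymm
  · rw [Submodule.span_le]
    rintro _ ⟨p, rfl⟩
    exact LinearMap.mem_ker.2 (hidMap_pathVec d h K p)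
  · intro w hw
    have hker : ∀ j, (∑ i, w (Sum.inl (i, j))) = ∑ k, w (Sum.inr (j, k)) := by
      intro j
      have := congrFun (LinearMap.mem_ker.1 hw) j
      simpa [hidMap, sub_eq_zero] using this
    rw [ker_repr d h K w ⟨0, hd⟩ ⟨0, hK⟩ hker]
    have hmem : ∀ p, pathVec d h K p ∈ Submodule.span ℚ (Set.range (pathVec d h K)) :=
      fun p => Submodule.subset_span ⟨p, rfl⟩
    refine Submodule.sub_mem _ (Submodule.add_mem _ ?_ ?_) ?_
    · exact Submodule.sum_mem _ fun x _ => Submodule.sum_mem _ fun y _ =>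
        Submodule.smul_mem _ _ (hmem _)
    · exact Submodule.sum_mem _ fun x _ => Submodule.sum_mem _ fun y _ =>
        Submodule.smul_mem _ _ (hmem _)
    · exact Submodule.sum_mem _ fun x _ => Submodule.smul_mem _ _ (hmem _)

lemma hidMap_surj (d h K : ℕ) (hd : 1 ≤ d) :
    Function.Surjective (hidMap d h K) := by
  intro v
  refine ⟨fun e => match e with
    | Sum.inl (i, j) => if i = (⟨0, hd⟩ : Fin d) then v j else 0
    | Sum.inr _ => 0, ?_⟩
  funext j
  simp [hidMap, Finset.sum_ite_eq']

lemma span_finrank (d h K : ℕ) (hd : 1 ≤ d) (hK : 1 ≤ K) :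
    Module.finrank ℚ (Submodule.span ℚ (Set.range (pathVec d h K))) = d * h + K * h - h := by
  rw [span_eq_ker d h K hd hK]
  have hsum := LinearMap.finrank_range_add_finrank_ker (hidMap d h K)
  have hrange : LinearMap.range (hidMap d h K) = ⊤ :=
    LinearMap.range_eq_top.2 (hidMap_surj d h K hd)
  rw [hrange, finrank_top] at hsum
  have h1 : Module.finrank ℚ (Fin h → ℚ) = h := by
    simp [Module.finrank_fintype_fun_eq_card]
  have h2 : Module.finrank ℚ (TwoLayerEdge d h K → ℚ) = d * h + h * K := by
    simp [Module.finrank_fintype_fun_eq_card]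
  rw [h1, h2] at hsum
  have : K * h = h * K := Nat.mul_comm _ _
  omega

/-- for a fully connected two-layer network with `d` inputs, `h` hidden
nodes and `K` outputs, the `d·h·K` path indicator vectors span a subspace of `ℚ^m`
(`m = dh + hK`) of dimension `dh + Kh − h`; equivalently the structure matrix has
rank `m − H` with `H = h`. -/
theorem two_layer_structure_matrix_rank (d h K : ℕ)
    (hd : 1 ≤ d) (hh : 1 ≤ h) (hK : 1 ≤ K) :
    Module.finrank ℚ (Submodule.span ℚ (Set.range (pathVec d h K))) = d * h + K * h - h ∧
      (structMatrix d h K).rank = (d + K) * h - h := by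
  refine ⟨span_finrank d h K hd hK, ?_⟩
  have ht : (structMatrix d h K).col = pathVec d h K := rfl
  rw [Matrix.rank_eq_finrank_span_cols, ht, span_finrank d h K hd hK, Nat.add_mul]
end

section
/- For an L-layer MLP with layer widths h_0, h_1, ..., h_L (all at least 1, with L ≥ 2), the rank over Q of the structure matrix, whose columns are the edge-indicator vectors of all input-to-output paths, equals m − H, where m = Σ_{l=1}^{L} h_{l−1} h_l is the number of weights and H = Σ_{l=1}^{L−1} h_l is the number of hidden nodes. -/
/-- Edges of a fully connected `L`-layer MLP with layer widths `h`: an edge is a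
layer index `l < L` together with a node of layer `l` and a node of layer `l+1`. -/
abbrev MLPEdge (L : ℕ) (h : Fin (L + 1) → ℕ) :=
  Σ l : Fin L, Fin (h l.castSucc) × Fin (h l.succ)

/-- A path: one node per layer. -/
abbrev MLPPath (L : ℕ) (h : Fin (L + 1) → ℕ) := ∀ l : Fin (L + 1), Fin (h l)

/-- The edge-indicator vector of the path `p` (it has exactly `L` ones). -/
def mlpPathVec (L : ℕ) (h : Fin (L + 1) → ℕ) (p : MLPPath L h) : MLPEdge L h → ℚ :=
  fun e => if p e.1.castSucc = e.2.1 ∧ p e.1.succ = e.2.2 then 1 else 0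

section Aux
variable (L : ℕ) (h : Fin (L + 1) → ℕ) (hh : ∀ l, 1 ≤ h l)

def qPath (e : MLPEdge L h) : MLPPath L h := fun k =>
  if hk : k = e.1.castSucc then Fin.cast (by rw [hk]) e.2.1
  else if hk' : k = e.1.succ then Fin.cast (by rw [hk']) e.2.2
  else ⟨0, hh k⟩

lemma qPath_val (e : MLPEdge L h) (k : Fin (L + 1)) :
    ((qPath L h hh e k : Fin (h k)) : ℕ) =
      if (k : ℕ) = (e.1 : ℕ) then (e.2.1 : ℕ)
      else if (k : ℕ) = (e.1 : ℕ) + 1 then (e.2.2 : ℕ) else 0 := by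
  unfold qPath
  have h1 : (k = e.1.castSucc) ↔ ((k : ℕ) = (e.1 : ℕ)) := by rw [Fin.ext_iff]; simp
  have h2 : (k = e.1.succ) ↔ ((k : ℕ) = (e.1 : ℕ) + 1) := by rw [Fin.ext_iff]; simp
  split_ifs with hA hB <;> simp_all

lemma qPath_val' (l : Fin L) (i : Fin (h l.castSucc)) (j : Fin (h l.succ))
    (k : Fin (L + 1)) :
    ((qPath L h hh ⟨l, i, j⟩ k : Fin (h k)) : ℕ) =
      if (k : ℕ) = (l : ℕ) then (i : ℕ)
      else if (k : ℕ) = (l : ℕ) + 1 then (j : ℕ) else 0 :=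
  qPath_val L h hh ⟨l, i, j⟩ k

lemma mlpPathVec_eq_ite (p : MLPPath L h) (e : MLPEdge L h) :
    mlpPathVec L h p e =
      if ((p e.1.castSucc : ℕ) = (e.2.1 : ℕ) ∧ (p e.1.succ : ℕ) = (e.2.2 : ℕ))
      then 1 else 0 := by
  simp [mlpPathVec, Fin.ext_iff]

lemma vec_sub (p p' p2 p2' : MLPPath L h) (t : Fin (L + 1))
    (h1 : ∀ t', t' ≠ t → p t' = p' t')
    (h2 : ∀ t', t' ≠ t → p2 t' = p2' t')
    (h3 : p t = p2 t) (h4 : p' t = p2' t)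
    (h5 : ∀ t' : Fin (L + 1), ((t' : ℕ) = (t : ℕ) + 1 ∨ (t : ℕ) = (t' : ℕ) + 1) → p t' = p2 t') :
    ∀ e, mlpPathVec L h p e - mlpPathVec L h p' e
        = mlpPathVec L h p2 e - mlpPathVec L h p2' e := by
  rintro ⟨k, x, y⟩
  simp only [mlpPathVec]
  by_cases hk : k.castSucc = t
  · have hks : k.succ ≠ t := by
      intro hc; rw [← hk] at hc
      have := congrArg Fin.val hc; simp at this
    have A : p k.castSucc = p2 k.castSucc := by rw [hk]; exact h3
    have A' : p' k.castSucc = p2' k.castSucc := by rw [hk]; exact h4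
    have B : p k.succ = p2 k.succ := h5 _ (Or.inl (by rw [← hk]; simp))
    have B' : p' k.succ = p2' k.succ :=
      (h1 _ hks).symm.trans (B.trans (h2 _ hks))
    rw [A, A', B, B']
  · by_cases hk' : k.succ = t
    · have A : p k.castSucc = p2 k.castSucc := h5 _ (Or.inr (by rw [← hk']; simp))
      have B : p k.succ = p2 k.succ := by rw [hk']; exact h3
      have A' : p' k.castSucc = p2' k.castSucc :=
        (h1 _ hk).symm.trans (A.trans (h2 _ hk))
      have B' : p' k.succ = p2' k.succ := by rw [hk']; exact h4
      rw [A, A', B, B']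
    · rw [h1 _ hk, h1 _ hk', h2 _ hk, h2 _ hk']
      simp

lemma qPath_vec_self (e : MLPEdge L h) :
    mlpPathVec L h (qPath L h hh e) e = 1 := by
  rw [mlpPathVec_eq_ite, if_pos]
  constructor <;> rw [qPath_val] <;> simp

lemma qPath_vec_ne (s t : MLPEdge L h) (hs : (s.2.1 : ℕ) ≠ 0 ∨ (s.1 : ℕ) + 1 = L)
    (hne : mlpPathVec L h (qPath L h hh t) s ≠ 0) :
    t = s ∨ (t.1 : ℕ) < (s.1 : ℕ) := by
  rw [mlpPathVec_eq_ite] at hne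
  have hc : ((qPath L h hh t s.1.castSucc : ℕ) = (s.2.1 : ℕ)
      ∧ (qPath L h hh t s.1.succ : ℕ) = (s.2.2 : ℕ)) := by
    by_contra hcc; rw [if_neg hcc] at hne; exact hne rfl
  obtain ⟨hc1, hc2⟩ := hc
  rw [qPath_val] at hc1 hc2
  simp only [Fin.coe_castSucc, Fin.val_succ] at hc1 hc2
  obtain ⟨ls, is, js⟩ := s
  obtain ⟨lt, it, jt⟩ := t
  simp only at hc1 hc2 hs ⊢
  rcases lt_trichotomy (lt : ℕ) (ls : ℕ) with hlt | hlt | hlt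
  · exact Or.inr hlt
  · left
    have hfl : lt = ls := Fin.ext hlt
    subst hfl
    simp only [if_pos rfl] at hc1
    have hj : (lt : ℕ) + 1 ≠ (lt : ℕ) := by omega
    rw [if_neg hj, if_pos rfl] at hc2
    have : it = is := Fin.ext hc1
    have : jt = js := Fin.ext hc2
    simp_all
  · exfalso
    have hi0 : (is : ℕ) = 0 := by
      rw [if_neg (by omega), if_neg (by omega)] at hc1; omega
    have hL : (ls : ℕ) + 1 = L := by tauto
    have := lt.isLt; omega

def goodEdge (e : MLPEdge L h) : Prop := (e.2.1 : ℕ) ≠ 0 ∨ (e.1 : ℕ) + 1 = L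

instance : DecidablePred (goodEdge L h) := fun _ =>
  inferInstanceAs (Decidable (_ ∨ _))

def vFam : {e : MLPEdge L h // goodEdge L h e} → (MLPEdge L h → ℚ) :=
  fun s => mlpPathVec L h (qPath L h hh s.1)

lemma vFam_indep : LinearIndependent ℚ (vFam L h hh) := by
  rw [Fintype.linearIndependent_iff]
  intro g hg
  suffices H : ∀ n, ∀ s : {e : MLPEdge L h // goodEdge L h e}, (s.1.1 : ℕ) = n → g s = 0 by
    intro s; exact H _ s rfl
  intro n
  induction n using Nat.strong_induction_on with
  | _ n IH =>
    intro s hsn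
    have hev := congrFun hg s.1
    simp only [Finset.sum_apply, Pi.smul_apply, smul_eq_mul, Pi.zero_apply] at hev
    rw [Finset.sum_eq_single s] at hev
    · rw [vFam, qPath_vec_self, mul_one] at hev
      exact hev
    · intro t _ hts
      by_cases hz : mlpPathVec L h (qPath L h hh t.1) s.1 = 0
      · rw [vFam, hz, mul_zero]
      · rcases qPath_vec_ne L h hh s.1 t.1 s.2 hz with heq | hlt
        · exact absurd (Subtype.ext heq) hts
        · rw [IH _ (by omega) t rfl, zero_mul]
    · intro hs; exact absurd (Finset.mem_univ s) hs

lemma qPath_norm (e : MLPEdge L h) :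
    ∃ s : MLPEdge L h, goodEdge L h s ∧ qPath L h hh s = qPath L h hh e := by
  obtain ⟨l, i, j⟩ := e
  by_cases hgood : goodEdge L h ⟨l, i, j⟩
  · exact ⟨⟨l, i, j⟩, hgood, rfl⟩
  rw [goodEdge] at hgood
  push_neg at hgood
  obtain ⟨hi0, hlL⟩ := hgood
  replace hi0 : (i : ℕ) = 0 := hi0
  replace hlL : ¬((l : ℕ) + 1 = L) := hlL
  have hlL' : (l : ℕ) + 1 < L := by have := l.isLt; omega
  by_cases hj : (j : ℕ) = 0
  · refine ⟨⟨⟨L - 1, by omega⟩, ⟨0, hh _⟩, ⟨0, hh _⟩⟩, Or.inr (by simp; omega), ?_⟩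
    funext k; apply Fin.ext
    rw [qPath_val', qPath_val']
    simp only [Fin.val_mk, hi0, hj]
    split_ifs <;> omega
  · refine ⟨⟨⟨(l : ℕ) + 1, hlL'⟩, Fin.cast (by congr 1) j, ⟨0, hh _⟩⟩,
      Or.inl (by simpa using hj), ?_⟩
    funext k; apply Fin.ext
    rw [qPath_val', qPath_val']
    simp only [Fin.val_mk, Fin.coe_cast, hi0]
    split_ifs <;> omega

def rPath (a : MLPPath L h) (n : ℕ) : MLPPath L h :=
  fun t => if (t : ℕ) ≤ n then a t else ⟨0, hh t⟩

lemma rPath_last (a : MLPPath L h) : rPath L h hh a L = a := by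
  funext t; simp [rPath, Nat.le_of_lt_succ t.isLt]

lemma rPath_zero (hL1 : 0 < L) (a : MLPPath L h) :
    rPath L h hh a 0 =
      qPath L h hh ⟨⟨0, hL1⟩, a ((⟨0, hL1⟩ : Fin L).castSucc), ⟨0, hh _⟩⟩ := by
  funext t
  by_cases ht : (t : ℕ) = 0
  · have : t = (⟨0, hL1⟩ : Fin L).castSucc := Fin.ext (by simpa using ht)
    subst this
    apply Fin.ext
    rw [qPath_val]
    simp [rPath]
  · apply Fin.ext
    rw [qPath_val]
    simp only [rPath]
    split_ifs <;> simp_all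

lemma telescope (a : MLPPath L h) (n : ℕ) (hn : n < L) :
    mlpPathVec L h (rPath L h hh a (n + 1)) =
      mlpPathVec L h (rPath L h hh a n)
      + mlpPathVec L h (qPath L h hh
          ⟨⟨n, hn⟩, a ((⟨n, hn⟩ : Fin L).castSucc), a ((⟨n, hn⟩ : Fin L).succ)⟩)
      - mlpPathVec L h (qPath L h hh
          ⟨⟨n, hn⟩, a ((⟨n, hn⟩ : Fin L).castSucc), ⟨0, hh _⟩⟩) := by
  set t : Fin (L + 1) := (⟨n, hn⟩ : Fin L).succ with htdef
  have htv : (t : ℕ) = n + 1 := rfl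
  have key := vec_sub L h
    (rPath L h hh a (n + 1)) (rPath L h hh a n)
    (qPath L h hh ⟨⟨n, hn⟩, a ((⟨n, hn⟩ : Fin L).castSucc), a ((⟨n, hn⟩ : Fin L).succ)⟩)
    (qPath L h hh ⟨⟨n, hn⟩, a ((⟨n, hn⟩ : Fin L).castSucc), ⟨0, hh _⟩⟩)
    t ?_ ?_ ?_ ?_ ?_
  · funext e
    have hk := key e
    simp only [Pi.add_apply, Pi.sub_apply]
    linarith
  · -- h1 : rPath (n+1) = rPath n away from t
    intro t' ht'
    have hne : (t' : ℕ) ≠ n + 1 := fun hc => ht' (Fin.ext (by rw [hc, htv]))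
    simp only [rPath]
    split_ifs <;> first | rfl | omega
  · -- h2 : the two qPaths agree away from t
    intro t' ht'
    have hne : (t' : ℕ) ≠ n + 1 := fun hc => ht' (Fin.ext (by rw [hc, htv]))
    apply Fin.ext
    rw [qPath_val, qPath_val]
    simp only
    split_ifs <;> first | rfl | omega
  · -- h3 : values at t
    apply Fin.ext
    rw [qPath_val]
    simp only [rPath, htv, Fin.val_mk]
    rw [if_pos (le_refl _), if_neg (by omega)]
    simp only [if_true]
    rfl
  · -- h4
    apply Fin.ext
    rw [qPath_val]
    simp [rPath, htv]
  · -- h5 : neighbours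
    intro t' ht'
    rw [htv] at ht'
    rcases ht' with ht' | ht'
    · -- t' = n + 2
      apply Fin.ext
      rw [qPath_val]
      simp only [rPath]
      split_ifs <;> first | rfl | omega
    · -- t' = n
      have : t' = (⟨n, hn⟩ : Fin L).castSucc := Fin.ext (by simpa using ht'.symm; )
      subst this
      apply Fin.ext
      rw [qPath_val]
      simp [rPath]

lemma qPath_mem (e : MLPEdge L h) :
    mlpPathVec L h (qPath L h hh e) ∈
      Submodule.span ℚ (Set.range (vFam L h hh)) := by
  obtain ⟨s, hs, hqs⟩ := qPath_norm L h hh e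
  rw [← hqs]
  exact Submodule.subset_span ⟨⟨s, hs⟩, rfl⟩

lemma path_mem (hL1 : 0 < L) (a : MLPPath L h) :
    mlpPathVec L h a ∈ Submodule.span ℚ (Set.range (vFam L h hh)) := by
  have key : ∀ n, n ≤ L →
      mlpPathVec L h (rPath L h hh a n) ∈
        Submodule.span ℚ (Set.range (vFam L h hh)) := by
    intro n
    induction n with
    | zero =>
      intro _
      rw [rPath_zero L h hh hL1 a]
      exact qPath_mem L h hh _
    | succ n IH =>
      intro hn1
      have hn : n < L := by omega
      rw [telescope L h hh a n hn]
      exact Submodule.sub_mem _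
        (Submodule.add_mem _ (IH (by omega)) (qPath_mem L h hh _))
        (qPath_mem L h hh _)
  rw [← rPath_last L h hh a]
  exact key L le_rfl

lemma span_eq (hL1 : 0 < L) :
    Submodule.span ℚ (Set.range (mlpPathVec L h)) =
      Submodule.span ℚ (Set.range (vFam L h hh)) := by
  apply le_antisymm
  · rw [Submodule.span_le]
    rintro _ ⟨a, rfl⟩
    exact path_mem L h hh hL1 a
  · rw [Submodule.span_le]
    rintro _ ⟨s, rfl⟩
    exact Submodule.subset_span ⟨qPath L h hh s.1, rfl⟩

lemma card_good (hh' : ∀ l, 1 ≤ h l) :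
    Fintype.card {e : MLPEdge L h // goodEdge L h e}
      + (∑ l : Fin L, if (l : ℕ) + 1 = L then 0 else h l.succ)
      = ∑ l : Fin L, h l.castSucc * h l.succ := by
  classical
  rw [Fintype.card_subtype, Finset.card_filter,
    ← Finset.univ_sigma_univ, Finset.sum_sigma, ← Finset.sum_add_distrib]
  apply Finset.sum_congr rfl
  intro l _
  by_cases hc : (l : ℕ) + 1 = L
  · simp only [hc, if_pos rfl]
    simp [goodEdge, hc, Finset.sum_const, mul_comm]
  · rw [if_neg hc]
    have key : ∀ x : Fin (h l.castSucc) × Fin (h l.succ),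
        (if goodEdge L h ⟨l, x⟩ then (1:ℕ) else 0)
          = if (x.1 : ℕ) ≠ 0 then 1 else 0 := by
      intro x
      have : goodEdge L h ⟨l, x⟩ ↔ ((x.1 : ℕ) ≠ 0) := by
        constructor
        · rintro (hx | hx)
          · exact hx
          · exact absurd hx hc
        · exact Or.inl
      simp [this]
    rw [Finset.sum_congr rfl fun x _ => key x, Fintype.sum_prod_type]
    have hsum : ∀ i : Fin (h l.castSucc),
        (∑ _j : Fin (h l.succ), if (i : ℕ) ≠ 0 then (1:ℕ) else 0)
          = if (i : ℕ) ≠ 0 then h l.succ else 0 := by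
      intro i
      by_cases hi : (i : ℕ) ≠ 0 <;> simp [hi]
    rw [Finset.sum_congr rfl fun i _ => hsum i]
    have h2 : (∑ i : Fin (h l.castSucc), if (i : ℕ) = 0 then h l.succ else 0)
        = h l.succ := by
      rw [Finset.sum_eq_single (⟨0, hh' l.castSucc⟩ : Fin (h l.castSucc))]
      · simp
      · intro i _ hi
        rw [if_neg]
        intro hv
        exact hi (Fin.ext (by simpa using hv))
      · intro hmem
        exact absurd (Finset.mem_univ _) hmem
    have h1 : (∑ i : Fin (h l.castSucc), if (i : ℕ) ≠ 0 then h l.succ else 0)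
        + (∑ i : Fin (h l.castSucc), if (i : ℕ) = 0 then h l.succ else 0)
      = h l.castSucc * h l.succ := by
      rw [← Finset.sum_add_distrib]
      have : ∀ i : Fin (h l.castSucc),
          ((if (i : ℕ) ≠ 0 then h l.succ else 0)
            + (if (i : ℕ) = 0 then h l.succ else 0)) = h l.succ := by
        intro i
        by_cases hi : (i : ℕ) = 0 <;> simp [hi]
      rw [Finset.sum_congr rfl fun i _ => this i]
      simp [Finset.sum_const, mul_comm]
    omega

lemma hidden_sum_eq :
    (∑ l : Fin (L + 1), if 0 < (l : ℕ) ∧ (l : ℕ) < L then h l else 0)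
      = ∑ l : Fin L, if (l : ℕ) + 1 = L then 0 else h l.succ := by
  rw [Fin.sum_univ_succ]
  have h0 : (if 0 < ((0 : Fin (L+1)) : ℕ) ∧ ((0 : Fin (L+1)) : ℕ) < L
      then h 0 else 0) = 0 := by simp
  rw [h0, zero_add]
  apply Finset.sum_congr rfl
  intro l _
  have hlt := l.isLt
  simp only [Fin.val_succ]
  split_ifs <;> first | rfl | omega

end Aux


/-- for an `L`-layer MLP (`L ≥ 2`) with layer widths `h_0,…,h_L ≥ 1`,
the rank over `ℚ` of the structure matrix, whose columns are the edge-indicator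
vectors of all input-to-output paths, equals `m − H`, where `m = ∑_{l=1}^L h_{l−1}h_l`
is the number of weights and `H = ∑_{l=1}^{L−1} h_l` is the number of hidden nodes. -/
theorem mlp_structure_matrix_rank (L : ℕ) (hL : 2 ≤ L)
    (h : Fin (L + 1) → ℕ) (hh : ∀ l, 1 ≤ h l) :
    Module.finrank ℚ (Submodule.span ℚ (Set.range (mlpPathVec L h))) =
      (∑ l : Fin L, h l.castSucc * h l.succ) -
        (∑ l : Fin (L + 1), if 0 < (l : ℕ) ∧ (l : ℕ) < L then h l else 0) := by
  rw [span_eq L h hh (by omega), finrank_span_eq_card (vFam_indep L h hh),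
    hidden_sum_eq L h]
  have hcard := card_good L h hh
  omega
end

section
/- The kernel of the path-value map log-linearization: for an MLP with all weights positive, the map w ↦ (log v_p(w))_{p ∈ P} from R^m (coordinates log w_e) to R^n is linear, and its kernel has dimension exactly H, the number of hidden nodes; the kernel consists exactly of vectors of the form (λ_v − λ_u)_{(u,v) ∈ E} for functions λ on nodes vanishing on input and output nodes. -/
/-- Nodes of the network: a layer index and a node of that layer. -/
abbrev MLPNode (L : ℕ) (h : Fin (L + 1) → ℕ) := Σ l : Fin (L + 1), Fin (h l)

/-- The linear map sending the edge-coordinates `x = (log w_e)_e` to the vector of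
path sums `(∑_{e ∈ p} x_e)_p = (log v_p(w))_p`. -/
noncomputable def pathSumMap (L : ℕ) (h : Fin (L + 1) → ℕ) :
    (MLPEdge L h → ℝ) →ₗ[ℝ] (MLPPath L h → ℝ) :=
  LinearMap.pi fun p => ∑ l : Fin L, LinearMap.proj ⟨l, (p l.castSucc, p l.succ)⟩

namespace MLPAux

variable {L : ℕ} {h : Fin (L + 1) → ℕ}

lemma pathSumMap_apply (x : MLPEdge L h → ℝ) (p : MLPPath L h) :
    pathSumMap L h x p = ∑ l : Fin L, x ⟨l, (p l.castSucc, p l.succ)⟩ := by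
  simp [pathSumMap]

lemma mem_ker_iff (x : MLPEdge L h → ℝ) :
    x ∈ LinearMap.ker (pathSumMap L h) ↔
      ∀ p : MLPPath L h, ∑ l : Fin L, x ⟨l, (p l.castSucc, p l.succ)⟩ = 0 := by
  simp [LinearMap.mem_ker, funext_iff, pathSumMap_apply]

/-- canonical path through node `(m, i)`, zero elsewhere. -/
def qpath (hh : ∀ l, 1 ≤ h l) (m : Fin (L + 1)) (i : Fin (h m)) : MLPPath L h :=
  Function.update (fun k => ⟨0, hh k⟩) m i

lemma qpath_self (hh : ∀ l, 1 ≤ h l) (m : Fin (L + 1)) (i : Fin (h m)) :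
    qpath hh m i m = i := by simp [qpath]

lemma qpath_ne (hh : ∀ l, 1 ≤ h l) (m : Fin (L + 1)) (i : Fin (h m)) {k : Fin (L + 1)}
    (hk : k ≠ m) : qpath hh m i k = ⟨0, hh k⟩ := by simp [qpath, hk]

/-- layers strictly below `m` -/
def F (L : ℕ) (m : ℕ) : Finset (Fin L) := Finset.univ.filter fun k => (k : ℕ) < m

lemma F_zero : F L 0 = ∅ := by simp [F]

lemma F_top : F L L = Finset.univ := by
  ext k; simp [F, k.isLt]

lemma not_mem_F (l : Fin L) : l ∉ F L (l : ℕ) := by simp [F]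

lemma F_succ (l : Fin L) : F L ((l : ℕ) + 1) = insert l (F L (l : ℕ)) := by
  ext k
  simp only [F, Finset.mem_filter, Finset.mem_univ, true_and, Finset.mem_insert]
  constructor
  · intro hk
    rcases Nat.lt_succ_iff_lt_or_eq.1 hk with hk | hk
    · exact Or.inr hk
    · exact Or.inl (Fin.ext hk)
  · rintro (rfl | hk)
    · omega
    · omega

/-- `λ` built from `x`: partial sum of `x` along the canonical path to node `n`. -/
noncomputable def lamOf (hh : ∀ l, 1 ≤ h l) (x : MLPEdge L h → ℝ) (n : MLPNode L h) : ℝ :=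
  ∑ k ∈ F L (n.1 : ℕ), x ⟨k, (qpath hh n.1 n.2 k.castSucc, qpath hh n.1 n.2 k.succ)⟩

lemma lamOf_zero (hh : ∀ l, 1 ≤ h l) (x : MLPEdge L h → ℝ) (i : Fin (h 0)) :
    lamOf hh x ⟨0, i⟩ = 0 := by
  simp [lamOf, F_zero]

lemma lamOf_last (hh : ∀ l, 1 ≤ h l) {x : MLPEdge L h → ℝ}
    (hx : x ∈ LinearMap.ker (pathSumMap L h)) (i : Fin (h (Fin.last L))) :
    lamOf hh x ⟨Fin.last L, i⟩ = 0 := by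
  have := (mem_ker_iff x).1 hx (qpath hh (Fin.last L) i)
  simpa [lamOf, Fin.val_last, F_top] using this

/-- telescoping of a partial sum of differences along a path. -/
lemma telescope (lam : MLPNode L h → ℝ) (p : MLPPath L h) (m : Fin (L + 1)) :
    ∑ k ∈ F L (m : ℕ),
        (lam ⟨k.succ, p k.succ⟩ - lam ⟨k.castSucc, p k.castSucc⟩)
      = lam ⟨m, p m⟩ - lam ⟨0, p 0⟩ := by
  induction m using Fin.induction with
  | zero => simp [F_zero]
  | succ l ih =>
    have h1 : ((l.succ : Fin (L + 1)) : ℕ) = (l : ℕ) + 1 := rfl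
    have h2 : ((l.castSucc : Fin (L + 1)) : ℕ) = (l : ℕ) := rfl
    rw [h1, F_succ, Finset.sum_insert (not_mem_F l)]
    rw [h2] at ih
    rw [ih]
    ring

lemma mem_ker_of (lam : MLPNode L h → ℝ)
    (h0 : ∀ i : Fin (h 0), lam ⟨0, i⟩ = 0)
    (hLa : ∀ i : Fin (h (Fin.last L)), lam ⟨Fin.last L, i⟩ = 0)
    (x : MLPEdge L h → ℝ)
    (hx : ∀ e : MLPEdge L h, x e = lam ⟨e.1.succ, e.2.2⟩ - lam ⟨e.1.castSucc, e.2.1⟩) :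
    x ∈ LinearMap.ker (pathSumMap L h) := by
  rw [mem_ker_iff]
  intro p
  have : ∑ l : Fin L, x ⟨l, (p l.castSucc, p l.succ)⟩
      = ∑ k ∈ F L ((Fin.last L : Fin (L+1)) : ℕ),
          (lam ⟨k.succ, p k.succ⟩ - lam ⟨k.castSucc, p k.castSucc⟩) := by
    rw [Fin.val_last, F_top]
    exact Finset.sum_congr rfl fun l _ => hx ⟨l, (p l.castSucc, p l.succ)⟩
  rw [this, telescope, h0, hLa]
  ring

/-- layers strictly above `l` -/
def G (L : ℕ) (l : Fin L) : Finset (Fin L) := Finset.univ.filter fun k => (l : ℕ) < (k : ℕ)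

lemma filter_not_lt (l : Fin L) :
    Finset.univ.filter (fun k : Fin L => ¬ (k : ℕ) < (l : ℕ)) = insert l (G L l) := by
  ext k
  simp only [G, Finset.mem_filter, Finset.mem_univ, true_and, Finset.mem_insert]
  constructor
  · intro hk
    rcases Nat.lt_or_ge (l : ℕ) (k : ℕ) with hk' | hk'
    · exact Or.inr hk'
    · exact Or.inl (Fin.ext (by omega))
  · rintro (rfl | hk) <;> omega

lemma l_not_mem_G (l : Fin L) : l ∉ G L l := by simp [G]

lemma filter_not_lt_succ (l : Fin L) :
    Finset.univ.filter (fun k : Fin L => ¬ (k : ℕ) < (l : ℕ) + 1) = G L l := by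
  ext k
  simp only [G, Finset.mem_filter, Finset.mem_univ, true_and]
  omega

lemma edge_eq (hh : ∀ l, 1 ≤ h l) {x : MLPEdge L h → ℝ}
    (hx : x ∈ LinearMap.ker (pathSumMap L h)) (l : Fin L)
    (i : Fin (h l.castSucc)) (j : Fin (h l.succ)) :
    x ⟨l, (i, j)⟩ = lamOf hh x ⟨l.succ, j⟩ - lamOf hh x ⟨l.castSucc, i⟩ := by
  set q2 : MLPPath L h := qpath hh l.succ j with hq2
  set r : MLPPath L h := Function.update q2 l.castSucc i with hr
  have hne : l.castSucc ≠ l.succ := by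
    intro hcon
    have := congrArg Fin.val hcon
    simp [Fin.val_succ] at this
  -- values of r
  have hrc : r l.castSucc = i := by simp [hr]
  have hrs : r l.succ = j := by
    rw [hr, Function.update_of_ne (Ne.symm hne), hq2, qpath_self]
  -- r agrees with qpath l.castSucc i on low layers
  have hlow : ∀ m : Fin (L + 1), (m : ℕ) ≤ (l : ℕ) → r m = qpath hh l.castSucc i m := by
    intro m hm
    by_cases hm' : m = l.castSucc
    · subst hm'; rw [hrc, qpath_self]
    · have hm'' : m ≠ l.succ := by
        intro hcon; apply absurd hm; rw [hcon]; simp [Fin.val_succ]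
      rw [hr, Function.update_of_ne hm', hq2, qpath_ne hh _ _ hm'',
        qpath_ne hh _ _ hm']
  -- r agrees with q2 on high layers
  have hhigh : ∀ m : Fin (L + 1), (l : ℕ) < (m : ℕ) → r m = q2 m := by
    intro m hm
    have hm' : m ≠ l.castSucc := by
      intro hcon; rw [hcon] at hm; simp at hm
    rw [hr, Function.update_of_ne hm']
  have h1 := (mem_ker_iff x).1 hx r
  have h2 := (mem_ker_iff x).1 hx q2
  -- split sum for r
  rw [← Finset.sum_filter_add_sum_filter_not Finset.univ (fun k : Fin L => (k : ℕ) < (l : ℕ)),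
    filter_not_lt, Finset.sum_insert (l_not_mem_G l)] at h1
  -- split sum for q2
  rw [← Finset.sum_filter_add_sum_filter_not Finset.univ (fun k : Fin L => (k : ℕ) < (l : ℕ) + 1),
    filter_not_lt_succ] at h2
  have e1 : ∑ k ∈ Finset.univ.filter (fun k : Fin L => (k : ℕ) < (l : ℕ)),
      x ⟨k, (r k.castSucc, r k.succ)⟩ = lamOf hh x ⟨l.castSucc, i⟩ := by
    rw [lamOf]
    apply Finset.sum_congr (by rw [Fin.coe_castSucc]; rfl)
    intro k hk
    simp only [F, Finset.mem_filter, Finset.mem_univ, true_and, Fin.coe_castSucc] at hk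
    rw [hlow k.castSucc (by simpa using hk.le), hlow k.succ (by simp only [Fin.val_succ]; omega)]
  have e2 : ∑ k ∈ Finset.univ.filter (fun k : Fin L => (k : ℕ) < (l : ℕ) + 1),
      x ⟨k, (q2 k.castSucc, q2 k.succ)⟩ = lamOf hh x ⟨l.succ, j⟩ := by
    rw [lamOf]
    apply Finset.sum_congr (by rw [Fin.val_succ]; rfl)
    intro k hk
    rfl
  have e3 : ∑ k ∈ G L l, x ⟨k, (r k.castSucc, r k.succ)⟩
      = ∑ k ∈ G L l, x ⟨k, (q2 k.castSucc, q2 k.succ)⟩ := by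
    apply Finset.sum_congr rfl
    intro k hk
    simp only [G, Finset.mem_filter] at hk
    rw [hhigh k.castSucc (by simp; omega), hhigh k.succ (by simp [Fin.val_succ]; omega)]
  rw [e1, hrc, hrs, e3] at h1
  rw [e2] at h2
  linarith

/-- hidden nodes -/
abbrev Hidden (L : ℕ) (h : Fin (L + 1) → ℕ) :=
  {n : MLPNode L h // 0 < (n.1 : ℕ) ∧ (n.1 : ℕ) < L}

/-- extend a function on hidden nodes by zero -/
noncomputable def extendZ (μ : Hidden L h → ℝ) (n : MLPNode L h) : ℝ :=
  if hn : 0 < (n.1 : ℕ) ∧ (n.1 : ℕ) < L then μ ⟨n, hn⟩ else 0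

lemma extendZ_zero (μ : Hidden L h → ℝ) (i : Fin (h 0)) : extendZ μ ⟨0, i⟩ = 0 := by
  simp [extendZ]

lemma extendZ_last (μ : Hidden L h → ℝ) (i : Fin (h (Fin.last L))) :
    extendZ μ ⟨Fin.last L, i⟩ = 0 := by
  simp [extendZ]

/-- forward linear map: `x ↦ λ_x` restricted to hidden nodes -/
noncomputable def fwd (hh : ∀ l, 1 ≤ h l) :
    (MLPEdge L h → ℝ) →ₗ[ℝ] (Hidden L h → ℝ) where
  toFun x := fun n => lamOf hh x n.1
  map_add' x y := by
    funext n
    simp [lamOf, Finset.sum_add_distrib]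
  map_smul' c x := by
    funext n
    simp [lamOf, Finset.mul_sum]

/-- backward linear map: `μ ↦ (extendZ μ (v) - extendZ μ (u))_{(u,v)}` -/
noncomputable def bwd : (Hidden L h → ℝ) →ₗ[ℝ] (MLPEdge L h → ℝ) where
  toFun μ := fun e => extendZ μ ⟨e.1.succ, e.2.2⟩ - extendZ μ ⟨e.1.castSucc, e.2.1⟩
  map_add' μ ν := by
    funext e
    simp only [extendZ, Pi.add_apply]
    split_ifs <;> ring
  map_smul' c μ := by
    funext e
    simp only [extendZ, Pi.smul_apply, RingHom.id_apply, smul_eq_mul]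
    split_ifs <;> ring

lemma bwd_mem_ker (μ : Hidden L h → ℝ) : bwd μ ∈ LinearMap.ker (pathSumMap L h) :=
  mem_ker_of (extendZ μ) (extendZ_zero μ) (extendZ_last μ) (bwd μ) (fun _ => rfl)

lemma fwd_bwd (hh : ∀ l, 1 ≤ h l) (μ : Hidden L h → ℝ) : fwd hh (bwd μ) = μ := by
  funext n
  obtain ⟨⟨m, i⟩, hn⟩ := n
  show lamOf hh (bwd μ) ⟨m, i⟩ = μ ⟨⟨m, i⟩, hn⟩
  have : lamOf hh (bwd μ) ⟨m, i⟩
      = ∑ k ∈ F L (m : ℕ),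
          (extendZ μ ⟨k.succ, qpath hh m i k.succ⟩
            - extendZ μ ⟨k.castSucc, qpath hh m i k.castSucc⟩) := rfl
  rw [this, telescope (extendZ μ) (qpath hh m i) m, qpath_self]
  rw [show extendZ μ ⟨0, qpath hh m i 0⟩ = 0 from extendZ_zero μ _]
  rw [show extendZ μ ⟨m, i⟩ = μ ⟨⟨m, i⟩, hn⟩ from dif_pos hn]
  ring

lemma extendZ_fwd (hh : ∀ l, 1 ≤ h l) {x : MLPEdge L h → ℝ}
    (hx : x ∈ LinearMap.ker (pathSumMap L h)) (n : MLPNode L h) :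
    extendZ (fwd hh x) n = lamOf hh x n := by
  rw [extendZ]
  split_ifs with hn
  · rfl
  · obtain ⟨m, i⟩ := n
    simp only [not_and_or, not_lt, Nat.le_zero] at hn
    rcases hn with hn | hn
    · have : m = 0 := Fin.ext hn
      subst this
      exact (lamOf_zero hh x i).symm
    · have : m = Fin.last L := Fin.ext (le_antisymm (Nat.lt_succ_iff.1 m.isLt) hn)
      subst this
      exact (lamOf_last hh hx i).symm

lemma bwd_fwd (hh : ∀ l, 1 ≤ h l) {x : MLPEdge L h → ℝ}
    (hx : x ∈ LinearMap.ker (pathSumMap L h)) : bwd (fwd hh x) = x := by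
  funext e
  obtain ⟨l, i, j⟩ := e
  show extendZ (fwd hh x) ⟨l.succ, j⟩ - extendZ (fwd hh x) ⟨l.castSucc, i⟩ = x ⟨l, (i, j)⟩
  rw [extendZ_fwd hh hx, extendZ_fwd hh hx, ← edge_eq hh hx l i j]

/-- the kernel is linearly equivalent to functions on hidden nodes -/
noncomputable def kerEquiv (hh : ∀ l, 1 ≤ h l) :
    LinearMap.ker (pathSumMap L h) ≃ₗ[ℝ] (Hidden L h → ℝ) :=
  LinearEquiv.ofLinear
    ((fwd hh).comp (LinearMap.ker (pathSumMap L h)).subtype)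
    (LinearMap.codRestrict _ bwd bwd_mem_ker)
    (LinearMap.ext fun μ => fwd_bwd hh μ)
    (LinearMap.ext fun x => Subtype.ext (bwd_fwd hh x.2))

lemma card_hidden :
    Fintype.card (Hidden L h)
      = ∑ l : Fin (L + 1), if 0 < (l : ℕ) ∧ (l : ℕ) < L then h l else 0 := by
  let e : Hidden L h ≃ Σ l : {l : Fin (L + 1) // 0 < (l : ℕ) ∧ (l : ℕ) < L}, Fin (h l.1) :=
    { toFun := fun n => ⟨⟨n.1.1, n.2⟩, n.1.2⟩
      invFun := fun s => ⟨⟨s.1.1, s.2⟩, s.1.2⟩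
      left_inv := fun n => rfl
      right_inv := fun s => rfl }
  rw [Fintype.card_congr e, Fintype.card_sigma]
  simp only [Fintype.card_fin]
  rw [← Finset.sum_subtype (Finset.univ.filter fun l : Fin (L+1) => 0 < (l : ℕ) ∧ (l : ℕ) < L)
    (by simp) (fun l => h l)]
  rw [Finset.sum_filter]

end MLPAux

/-- for an MLP with all weights positive, `w ↦ (log v_p(w))_p` is linear
in the coordinates `log w_e` (it is the linear map `pathSumMap`); the kernel of this
linear map consists exactly of the vectors of the form `(λ_v − λ_u)_{(u,v) ∈ E}` for
functions `λ` on nodes vanishing on the input and output layers, and it has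
dimension exactly `H`, the number of hidden nodes. -/
theorem path_value_log_linearization_kernel (L : ℕ) (hL : 2 ≤ L)
    (h : Fin (L + 1) → ℕ) (hh : ∀ l, 1 ≤ h l) :
    -- linearity: on positive weights, `pathSumMap` applied to `(log w_e)_e`
    -- computes `(log v_p(w))_p`
    (∀ w : MLPEdge L h → ℝ, (∀ e, 0 < w e) → ∀ p : MLPPath L h,
      pathSumMap L h (fun e => Real.log (w e)) p =
        Real.log (∏ l : Fin L, w ⟨l, (p l.castSucc, p l.succ)⟩)) ∧
    -- kernel characterization
    (∀ x : MLPEdge L h → ℝ,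
      x ∈ LinearMap.ker (pathSumMap L h) ↔
        ∃ lam : MLPNode L h → ℝ,
          (∀ i : Fin (h 0), lam ⟨0, i⟩ = 0) ∧
          (∀ i : Fin (h (Fin.last L)), lam ⟨Fin.last L, i⟩ = 0) ∧
          (∀ e : MLPEdge L h,
            x e = lam ⟨e.1.succ, e.2.2⟩ - lam ⟨e.1.castSucc, e.2.1⟩)) ∧
    -- kernel dimension is the number of hidden nodes
    Module.finrank ℝ (LinearMap.ker (pathSumMap L h)) =
      ∑ l : Fin (L + 1), if 0 < (l : ℕ) ∧ (l : ℕ) < L then h l else 0 := by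
  refine ⟨?_, ?_, ?_⟩
  · intro w hw p
    rw [MLPAux.pathSumMap_apply]
    exact (Real.log_prod (fun l _ => (hw _).ne')).symm
  · intro x
    constructor
    · intro hx
      exact ⟨MLPAux.lamOf hh x, MLPAux.lamOf_zero hh x, MLPAux.lamOf_last hh hx,
        fun e => MLPAux.edge_eq hh hx e.1 e.2.1 e.2.2⟩
    · rintro ⟨lam, h0, hLa, hx⟩
      exact MLPAux.mem_ker_of lam h0 hLa x hx
  · rw [(MLPAux.kerEquiv hh).finrank_eq, Module.finrank_fintype_fun_eq_card]
    exact MLPAux.card_hidden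
end

section
/- Two positive weight vectors on a fully connected layered network are related by a positive scaling operator if and only if all their path values are equal: for w, w' ∈ (R^+)^m, (∃ c: Hidden → R^+ such that w'_{(u,v)} = (c_v/c_u) w_{(u,v)} for all edges, with c ≡ 1 on input/output nodes) ⟺ (for every input-to-output path p, ∏_{e ∈ p} w_e = ∏_{e ∈ p} w'_e). -/
/-- Weight space of a layered network: `w l i j` is the weight on the edge from
node `i` in layer `l` to node `j` in layer `l+1`. -/
abbrev Weights := ℕ → ℕ → ℕ → ℝ

/-- the path staying at node 0 except at layer `l`, where it is at node `i`. -/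
private def pth (l i : ℕ) : ℕ → ℕ := fun k => if k = l then i else 0

/-- the path staying at node 0 except at layers `l`, `l+1`. -/
private def pe (l i j : ℕ) : ℕ → ℕ :=
  fun k => if k = l then i else if k = l + 1 then j else 0

/-- suffix value along `pth l i` from layer `l` to layer `L`. -/
private noncomputable def sfx (L : ℕ) (v : Weights) (l i : ℕ) : ℝ :=
  ∏ k ∈ Finset.Ico l L, v k (pth l i k) (pth l i (k + 1))

private lemma sfx_pos (L : ℕ) (h : ℕ → ℕ) (hh : ∀ l, 1 ≤ h l) (v : Weights)
    (hv : ∀ l i j, l < L → i < h l → j < h (l + 1) → 0 < v l i j)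
    (l i : ℕ) (hi : i < h l) : 0 < sfx L v l i := by
  apply Finset.prod_pos
  intro k hk
  simp only [Finset.mem_Ico] at hk
  apply hv _ _ _ hk.2
  · unfold pth
    by_cases hkl : k = l
    · simpa [hkl] using hi
    · simpa [hkl] using Nat.lt_of_lt_of_le Nat.zero_lt_one (hh k)
  · unfold pth
    have : k + 1 ≠ l := by omega
    simpa [this] using Nat.lt_of_lt_of_le Nat.zero_lt_one (hh (k + 1))

private lemma decompB (L : ℕ) (v : Weights) (l i : ℕ) (hl : l ≤ L) :
    (∏ k ∈ Finset.range L, v k (pth l i k) (pth l i (k + 1))) =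
      (∏ k ∈ Finset.range l, v k (pth l i k) (pth l i (k + 1))) * sfx L v l i := by
  rw [Finset.range_eq_Ico, ← Finset.prod_Ico_consecutive _ (Nat.zero_le l) hl]
  rw [← Finset.range_eq_Ico]
  rfl

private lemma decompA (L : ℕ) (v : Weights) (l i j : ℕ) (hl : l < L) :
    (∏ k ∈ Finset.range L, v k (pe l i j k) (pe l i j (k + 1))) =
      (∏ k ∈ Finset.range l, v k (pth l i k) (pth l i (k + 1))) * v l i j *
        sfx L v (l + 1) j := by
  have h1 : l + 1 ≤ L := hl
  rw [Finset.range_eq_Ico, ← Finset.prod_Ico_consecutive _ (Nat.zero_le (l + 1)) h1,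
    ← Finset.range_eq_Ico, Finset.prod_range_succ]
  congr 1
  · congr 1
    · apply Finset.prod_congr rfl
      intro k hk
      simp only [Finset.mem_range] at hk
      have h2 : k ≠ l := by omega
      have h3 : k ≠ l + 1 := by omega
      have h4 : k + 1 ≠ l + 1 := by omega
      simp [pe, pth, h2, h3, h4]
    · simp [pe, pth]
  · apply Finset.prod_congr rfl
    intro k hk
    simp only [Finset.mem_Ico] at hk
    have h2 : k ≠ l := by omega
    have h3 : k + 1 ≠ l := by omega
    have h4 : k + 1 ≠ l + 1 := by omega
    simp [pe, pth, h2, h3, h4]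

/-- two positive weight vectors on a fully connected `L`-layer network
(`L ≥ 2`, layer widths `h l ≥ 1`) are related by a positive scaling operator iff all
their path values are equal. -/
theorem positive_scaling_iff_equal_path_values (L : ℕ) (hL : 2 ≤ L)
    (h : ℕ → ℕ) (hh : ∀ l, 1 ≤ h l) (w w' : Weights)
    (hw : ∀ l i j, l < L → i < h l → j < h (l + 1) → 0 < w l i j)
    (hw' : ∀ l i j, l < L → i < h l → j < h (l + 1) → 0 < w' l i j) :
    (∃ c : ℕ → ℕ → ℝ,
        (∀ l i, 0 < c l i) ∧ (∀ i, c 0 i = 1) ∧ (∀ i, c L i = 1) ∧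
        (∀ l i j, l < L → i < h l → j < h (l + 1) →
          w' l i j = (c (l + 1) j / c l i) * w l i j)) ↔
      (∀ p : ℕ → ℕ, (∀ l, l ≤ L → p l < h l) →
        ∏ l ∈ Finset.range L, w l (p l) (p (l + 1)) =
          ∏ l ∈ Finset.range L, w' l (p l) (p (l + 1))) := by
  constructor
  · rintro ⟨c, hcpos, hc0, hcL, hrel⟩ p hp
    have key : ∀ n, n ≤ L → ∏ l ∈ Finset.range n, w' l (p l) (p (l + 1)) =
        (c n (p n) / c 0 (p 0)) * ∏ l ∈ Finset.range n, w l (p l) (p (l + 1)) := by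
      intro n hn
      induction n with
      | zero => simp [hc0]
      | succ n ih =>
        have hn' : n ≤ L := Nat.le_of_succ_le hn
        rw [Finset.prod_range_succ, Finset.prod_range_succ, ih hn',
          hrel n (p n) (p (n + 1)) (Nat.lt_of_succ_le hn) (hp n hn') (hp (n + 1) hn)]
        have h1 : c n (p n) ≠ 0 := (hcpos _ _).ne'
        have h2 : c 0 (p 0) ≠ 0 := (hcpos _ _).ne'
        field_simp
    have := key L le_rfl
    rw [this, hcL, hc0]
    ring
  · intro hpath
    refine ⟨fun l i => if l ≤ L ∧ i < h l then sfx L w l i / sfx L w' l i else 1,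
      ?_, ?_, ?_, ?_⟩
    · intro l i
      by_cases hli : l ≤ L ∧ i < h l
      · simp only [hli, if_true]
        exact div_pos (sfx_pos L h hh w hw l i hli.2) (sfx_pos L h hh w' hw' l i hli.2)
      · simp [hli]
    · intro i
      by_cases hi0 : i < h 0
      · have hli : (0 : ℕ) ≤ L ∧ i < h 0 := ⟨Nat.zero_le L, hi0⟩
        have hvalid : ∀ l, l ≤ L → pth 0 i l < h l := by
          intro l hl
          unfold pth
          by_cases hl0 : l = 0
          · simpa [hl0] using hli.2
          · simpa [hl0] using Nat.lt_of_lt_of_le Nat.zero_lt_one (hh l)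
        have := hpath (pth 0 i) hvalid
        have h0 : sfx L w 0 i = sfx L w' 0 i := by
          unfold sfx
          rw [← Finset.range_eq_Ico]
          exact this
        have hne : sfx L w' 0 i ≠ 0 := (sfx_pos L h hh w' hw' 0 i hli.2).ne'
        exact (if_pos hli).trans (by rw [h0, div_self hne])
      · exact if_neg (fun hc => hi0 hc.2)
    · intro i
      by_cases hiL : i < h L
      · have hli : L ≤ L ∧ i < h L := ⟨le_rfl, hiL⟩
        have h1 : sfx L w L i = 1 := by unfold sfx; simp
        have h2 : sfx L w' L i = 1 := by unfold sfx; simp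
        exact (if_pos hli).trans (by rw [h1, h2, div_one])
      · exact if_neg (fun hc => hiL hc.2)
    · intro l i j hlL hi hj
      have hc1 : (l ≤ L ∧ i < h l) := ⟨le_of_lt hlL, hi⟩
      have hc2 : (l + 1 ≤ L ∧ j < h (l + 1)) := ⟨hlL, hj⟩
      simp only [hc1, hc2, if_true, and_self]
      -- validity of the two paths
      have hv1 : ∀ k, k ≤ L → pe l i j k < h k := by
        intro k hk
        unfold pe
        by_cases h1 : k = l
        · simpa [h1] using hi
        · by_cases h2 : k = l + 1
          · simpa [h1, h2] using hj
          · simpa [h1, h2] using Nat.lt_of_lt_of_le Nat.zero_lt_one (hh k)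
      have hv2 : ∀ k, k ≤ L → pth l i k < h k := by
        intro k hk
        unfold pth
        by_cases h1 : k = l
        · simpa [h1] using hi
        · simpa [h1] using Nat.lt_of_lt_of_le Nat.zero_lt_one (hh k)
      have E1 := hpath (pe l i j) hv1
      have E2 := hpath (pth l i) hv2
      rw [decompA L w l i j hlL, decompA L w' l i j hlL] at E1
      rw [decompB L w l i (le_of_lt hlL), decompB L w' l i (le_of_lt hlL)] at E2
      set T := ∏ k ∈ Finset.range l, w k (pth l i k) (pth l i (k + 1)) with hT
      set T' := ∏ k ∈ Finset.range l, w' k (pth l i k) (pth l i (k + 1)) with hT'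
      have hT'pos : 0 < T' := by
        apply Finset.prod_pos
        intro k hk
        simp only [Finset.mem_range] at hk
        exact hw' k _ _ (by omega) (hv2 k (by omega)) (hv2 (k + 1) (by omega))
      have hSl := sfx_pos L h hh w hw l i hi
      have hSl' := sfx_pos L h hh w' hw' l i hi
      have hSj := sfx_pos L h hh w hw (l + 1) j hj
      have hSj' := sfx_pos L h hh w' hw' (l + 1) j hj
      -- key equation: w' * sfx w' (l+1) j * sfx w l i = w * sfx w (l+1) j * sfx w' l i
      have key : w' l i j * sfx L w' (l + 1) j * sfx L w l i =
          w l i j * sfx L w (l + 1) j * sfx L w' l i := by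
        have hc : T' * (w' l i j * sfx L w' (l + 1) j * sfx L w l i) =
            T' * (w l i j * sfx L w (l + 1) j * sfx L w' l i) := by
          calc T' * (w' l i j * sfx L w' (l + 1) j * sfx L w l i)
              = (T' * w' l i j * sfx L w' (l + 1) j) * sfx L w l i := by ring
            _ = (T * w l i j * sfx L w (l + 1) j) * sfx L w l i := by rw [← E1]
            _ = (w l i j * sfx L w (l + 1) j) * (T * sfx L w l i) := by ring
            _ = (w l i j * sfx L w (l + 1) j) * (T' * sfx L w' l i) := by rw [E2]
            _ = T' * (w l i j * sfx L w (l + 1) j * sfx L w' l i) := by ring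
        exact mul_left_cancel₀ hT'pos.ne' hc
      field_simp
      linear_combination key
end

section
/- Scale-homogeneity of ReLU propagates invariance to outputs: under the hypotheses of the previous statement, the network outputs are equal: N_w^k(x) = N_{w'}^k(x) for every input x and output index k. -/
/-- Post-ReLU activation values: `act h w x l i` is the value `o^l_i(x)` of node `i`
in layer `l`, with `o^0 = x` and `o^{l+1}_j = σ(∑_i w^l(i,j) o^l_i)`, `σ = max(·,0)`. -/
noncomputable def act (h : ℕ → ℕ) (w : Weights) (x : ℕ → ℝ) : ℕ → ℕ → ℝ
  | 0, i => x i
  | l + 1, j => max 0 (∑ i ∈ Finset.range (h l), w l i j * act h w x l i)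

/-- The `k`-th network output: the output layer has no ReLU, so
`N_w^k(x) = ∑_{i} w^L(i, k) · o^{L−1}_i(x)`. -/
noncomputable def netOut (L : ℕ) (h : ℕ → ℕ) (w : Weights) (x : ℕ → ℝ) (k : ℕ) : ℝ :=
  ∑ i ∈ Finset.range (h (L - 1)), w (L - 1) i k * act h w x (L - 1) i

/-- if the weight vectors `w, w'` are related by a positive scaling
operator with node constants `c^l_i > 0` (equal to `1` on the input and output
layers), then the networks compute the same outputs: `N_w^k(x) = N_{w'}^k(x)` for
every input `x` and output index `k`. -/
theorem positive_scaling_preserves_network_outputs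
    (L : ℕ) (hL : 2 ≤ L) (h : ℕ → ℕ) (hh : ∀ l, 1 ≤ h l)
    (w w' : Weights) (c : ℕ → ℕ → ℝ)
    (hc : ∀ l i, 0 < c l i) (hc0 : ∀ i, c 0 i = 1) (hcL : ∀ i, c L i = 1)
    (hscale : ∀ l i j, l < L → i < h l → j < h (l + 1) →
      w l i j = (c (l + 1) j / c l i) * w' l i j) :
    ∀ (x : ℕ → ℝ) (k : ℕ), k < h L → netOut L h w x k = netOut L h w' x k := by
  intro x k hk
  have key : ∀ l, l < L → ∀ i, i < h l →
      act h w x l i = c l i * act h w' x l i := by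
    intro l
    induction l with
    | zero => intro _ i _; simp [act, hc0]
    | succ l ih =>
      intro hlt j hj
      have hlL : l < L := Nat.lt_of_succ_lt hlt
      have hsum : (∑ i ∈ Finset.range (h l), w l i j * act h w x l i)
          = c (l+1) j * ∑ i ∈ Finset.range (h l), w' l i j * act h w' x l i := by
        rw [Finset.mul_sum]
        apply Finset.sum_congr rfl
        intro i hi
        have hi' := Finset.mem_range.mp hi
        have hne : c l i ≠ 0 := (hc l i).ne'
        rw [hscale l i j hlL hi' hj, ih hlL i hi']
        field_simp
      show max 0 (∑ i ∈ Finset.range (h l), w l i j * act h w x l i)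
          = c (l+1) j * max 0 (∑ i ∈ Finset.range (h l), w' l i j * act h w' x l i)
      rw [hsum, mul_max_of_nonneg _ _ (le_of_lt (hc (l+1) j)), mul_zero]
  unfold netOut
  apply Finset.sum_congr rfl
  intro i hi
  have hi' := Finset.mem_range.mp hi
  have hL1 : L - 1 < L := Nat.sub_lt (by omega) (by omega)
  have hL1' : L - 1 + 1 = L := by omega
  have hk' : k < h (L - 1 + 1) := by rw [hL1']; exact hk
  rw [key (L-1) hL1 i hi', hscale (L-1) i k hL1 hi' hk']
  rw [hL1', hcL k]
  have hne : c (L-1) i ≠ 0 := (hc (L-1) i).ne'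
  field_simp
end

section
/- Edge-potential characterization of equal path products on a layered complete graph: let G be an L-partite graph with parts V_0,...,V_L and all edges between consecutive parts, and let f: E → R. Then Σ_{e ∈ p} f(e) = 0 for every path p choosing one vertex per part if and only if there exists λ: V → R with λ ≡ 0 on V_0 ∪ V_L and f(u,v) = λ(v) − λ(u) for every edge (u,v) between consecutive parts. -/
section Aux

variable {L : ℕ} {h : Fin (L + 1) → ℕ}

/-- The path that is `v` at layer `m` and the base vertex `0` elsewhere. -/
def layerPath (hh : ∀ l, 1 ≤ h l) (m : Fin (L + 1)) (v : Fin (h m)) (j : Fin (L + 1)) :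
    Fin (h j) :=
  if hj : j = m then Fin.cast (congrArg h hj.symm) v else ⟨0, hh j⟩

lemma layerPath_same (hh : ∀ l, 1 ≤ h l) (m : Fin (L + 1)) (v : Fin (h m)) :
    layerPath hh m v m = v := by
  unfold layerPath
  rw [dif_pos rfl]
  exact Fin.ext rfl

lemma layerPath_ne (hh : ∀ l, 1 ≤ h l) {m j : Fin (L + 1)} (v : Fin (h m)) (hj : j ≠ m) :
    layerPath hh m v j = ⟨0, hh j⟩ := dif_neg hj

/-- The path that is `u` at layer `m1`, `v` at layer `m2`, and `0` elsewhere. -/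
def layerPath2 (hh : ∀ l, 1 ≤ h l) (m1 m2 : Fin (L + 1)) (u : Fin (h m1)) (v : Fin (h m2))
    (j : Fin (L + 1)) : Fin (h j) :=
  if hj : j = m1 then Fin.cast (congrArg h hj.symm) u
  else if hj : j = m2 then Fin.cast (congrArg h hj.symm) v
  else ⟨0, hh j⟩

lemma layerPath2_fst (hh : ∀ l, 1 ≤ h l) (m1 m2 : Fin (L + 1)) (u : Fin (h m1))
    (v : Fin (h m2)) : layerPath2 hh m1 m2 u v m1 = u := by
  unfold layerPath2
  rw [dif_pos rfl]
  exact Fin.ext rfl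

lemma layerPath2_snd (hh : ∀ l, 1 ≤ h l) (m1 m2 : Fin (L + 1)) (u : Fin (h m1))
    (v : Fin (h m2)) (hne : m2 ≠ m1) : layerPath2 hh m1 m2 u v m2 = v := by
  unfold layerPath2
  rw [dif_neg hne, dif_pos rfl]
  exact Fin.ext rfl

lemma layerPath2_ne (hh : ∀ l, 1 ≤ h l) (m1 m2 : Fin (L + 1)) (u : Fin (h m1))
    (v : Fin (h m2)) {j : Fin (L + 1)} (h1 : j ≠ m1) (h2 : j ≠ m2) :
    layerPath2 hh m1 m2 u v j = ⟨0, hh j⟩ := by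
  unfold layerPath2
  rw [dif_neg h1, dif_neg h2]

/-- The prefix-sum potential. -/
def prefixLam (hh : ∀ l, 1 ≤ h l)
    (f : (Σ l : Fin L, Fin (h l.castSucc) × Fin (h l.succ)) → ℝ)
    (x : Σ m : Fin (L + 1), Fin (h m)) : ℝ :=
  ∑ j ∈ Finset.filter (fun j : Fin L => (j : ℕ) < (x.1 : ℕ)) Finset.univ,
    f ⟨j, (layerPath hh x.1 x.2 j.castSucc, layerPath hh x.1 x.2 j.succ)⟩

lemma sum_edges_congr (f : (Σ l : Fin L, Fin (h l.castSucc) × Fin (h l.succ)) → ℝ)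
    (p q : ∀ j : Fin (L + 1), Fin (h j)) (s : Finset (Fin L))
    (hp : ∀ j ∈ s, p j.castSucc = q j.castSucc) (hq : ∀ j ∈ s, p j.succ = q j.succ) :
    ∑ j ∈ s, f ⟨j, (p j.castSucc, p j.succ)⟩ = ∑ j ∈ s, f ⟨j, (q j.castSucc, q j.succ)⟩ :=
  Finset.sum_congr rfl fun j hj => by rw [hp j hj, hq j hj]

end Aux

/-- edge-potential characterization of vanishing path sums on a layered
complete `L`-partite graph (`L ≥ 2`) with nonempty parts `V_l = Fin (h l)`:
a function `f` on edges has `∑_{e ∈ p} f(e) = 0` for every path `p` choosing one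
vertex per part iff there is `λ` on vertices, vanishing on `V_0` and `V_L`, with
`f(u,v) = λ(v) − λ(u)` on every edge between consecutive parts. -/
theorem edge_potential_characterization (L : ℕ) (hL : 2 ≤ L)
    (h : Fin (L + 1) → ℕ) (hh : ∀ l, 1 ≤ h l)
    (f : (Σ l : Fin L, Fin (h l.castSucc) × Fin (h l.succ)) → ℝ) :
    (∀ p : ∀ l : Fin (L + 1), Fin (h l),
        ∑ l : Fin L, f ⟨l, (p l.castSucc, p l.succ)⟩ = 0) ↔
      ∃ lam : (Σ l : Fin (L + 1), Fin (h l)) → ℝ,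
        (∀ i : Fin (h 0), lam ⟨0, i⟩ = 0) ∧
        (∀ i : Fin (h (Fin.last L)), lam ⟨Fin.last L, i⟩ = 0) ∧
        (∀ (l : Fin L) (u : Fin (h l.castSucc)) (v : Fin (h l.succ)),
          f ⟨l, (u, v)⟩ = lam ⟨l.succ, v⟩ - lam ⟨l.castSucc, u⟩) := by
  constructor
  · intro hpath
    refine ⟨prefixLam hh f, ?_, ?_, ?_⟩
    · intro i
      unfold prefixLam
      simp
    · intro i
      unfold prefixLam
      rw [Finset.filter_true_of_mem (fun j _ => by simp only [Fin.val_last]; exact j.isLt)]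
      exact hpath (layerPath hh (Fin.last L) i)
    · intro l u v
      have hsplit : ∀ (p : ∀ j : Fin (L + 1), Fin (h j)) (k : ℕ),
          ∑ j ∈ Finset.filter (fun j : Fin L => (j : ℕ) < k) Finset.univ,
              f ⟨j, (p j.castSucc, p j.succ)⟩
            = - ∑ j ∈ Finset.filter (fun j : Fin L => ¬ (j : ℕ) < k) Finset.univ,
              f ⟨j, (p j.castSucc, p j.succ)⟩ := by
        intro p k
        have h1 := Finset.sum_filter_add_sum_filter_not Finset.univ
          (fun j : Fin L => (j : ℕ) < k) (fun j => f ⟨j, (p j.castSucc, p j.succ)⟩)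
        have h2 := hpath p
        linarith
      set Q := layerPath2 hh l.castSucc l.succ u v with hQ
      have hcs : ((l.castSucc : Fin (L + 1)) : ℕ) = (l : ℕ) := rfl
      have hsc : ((l.succ : Fin (L + 1)) : ℕ) = (l : ℕ) + 1 := rfl
      have hQlow : ∀ k : Fin (L + 1), (k : ℕ) ≤ (l : ℕ) →
          Q k = layerPath hh l.castSucc u k := by
        intro k hk
        rcases eq_or_ne k l.castSucc with rfl | hne
        · rw [hQ, layerPath2_fst, layerPath_same]
        · have hne2 : k ≠ l.succ := by
            intro hc
            have := congrArg Fin.val hc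
            rw [hsc] at this
            omega
          rw [hQ, layerPath2_ne hh _ _ _ _ hne hne2, layerPath_ne hh _ hne]
      have hQhigh : ∀ k : Fin (L + 1), (l : ℕ) < (k : ℕ) →
          Q k = layerPath hh l.succ v k := by
        intro k hk
        rcases eq_or_ne k l.succ with rfl | hne
        · rw [hQ, layerPath2_snd hh _ _ _ _ (by
            intro hc
            have := congrArg Fin.val hc
            rw [hsc, hcs] at this
            omega), layerPath_same]
        · have hne1 : k ≠ l.castSucc := by
            intro hc
            have := congrArg Fin.val hc
            rw [hcs] at this
            omega
          rw [hQ, layerPath2_ne hh _ _ _ _ hne1 hne, layerPath_ne hh _ hne]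
      have hA : prefixLam hh f ⟨l.succ, v⟩
          = ∑ j ∈ Finset.filter (fun j : Fin L => (j : ℕ) < ((l.succ : Fin (L + 1)) : ℕ))
              Finset.univ, f ⟨j, (Q j.castSucc, Q j.succ)⟩ := by
        unfold prefixLam
        rw [hsplit (layerPath hh l.succ v) _, hsplit Q _]
        congr 1
        refine sum_edges_congr f _ Q _ ?_ ?_
        · intro j hj
          have hj' : ¬ (j : ℕ) < ((l.succ : Fin (L + 1)) : ℕ) := (Finset.mem_filter.mp hj).2
          exact (hQhigh j.castSucc (by simp only [Fin.coe_castSucc]; rw [hsc] at hj'; omega)).symm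
        · intro j hj
          have hj' : ¬ (j : ℕ) < ((l.succ : Fin (L + 1)) : ℕ) := (Finset.mem_filter.mp hj).2
          exact (hQhigh j.succ (by simp only [Fin.val_succ]; rw [hsc] at hj'; omega)).symm
      have hins : Finset.filter (fun j : Fin L => (j : ℕ) < ((l.succ : Fin (L + 1)) : ℕ))
            Finset.univ
          = insert l (Finset.filter
              (fun j : Fin L => (j : ℕ) < ((l.castSucc : Fin (L + 1)) : ℕ)) Finset.univ) := by
        ext j
        simp only [Finset.mem_filter, Finset.mem_insert, Finset.mem_univ, true_and, hsc, hcs,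
          Fin.ext_iff]
        omega
      have hl_not : l ∉ Finset.filter
          (fun j : Fin L => (j : ℕ) < ((l.castSucc : Fin (L + 1)) : ℕ)) Finset.univ := by
        simp [hcs]
      have hQl1 : Q l.castSucc = u := by rw [hQ]; exact layerPath2_fst hh _ _ _ _
      have hQl2 : Q l.succ = v := by
        rw [hQ]
        refine layerPath2_snd hh _ _ _ _ ?_
        intro hc
        have := congrArg Fin.val hc
        rw [hsc, hcs] at this
        omega
      have hB : ∑ j ∈ Finset.filter
            (fun j : Fin L => (j : ℕ) < ((l.castSucc : Fin (L + 1)) : ℕ)) Finset.univ,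
            f ⟨j, (Q j.castSucc, Q j.succ)⟩ = prefixLam hh f ⟨l.castSucc, u⟩ := by
        unfold prefixLam
        refine sum_edges_congr f Q _ _ ?_ ?_
        · intro j hj
          have hj' : (j : ℕ) < ((l.castSucc : Fin (L + 1)) : ℕ) := (Finset.mem_filter.mp hj).2
          exact hQlow j.castSucc (by simp only [Fin.coe_castSucc]; rw [hcs] at hj'; omega)
        · intro j hj
          have hj' : (j : ℕ) < ((l.castSucc : Fin (L + 1)) : ℕ) := (Finset.mem_filter.mp hj).2
          exact hQlow j.succ (by simp only [Fin.val_succ]; rw [hcs] at hj'; omega)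
      rw [hA, hins, Finset.sum_insert hl_not, hQl1, hQl2, hB]
      ring
  · rintro ⟨lam, h0, hLst, hedge⟩ p
    set g : ℕ → ℝ := fun i => if hi : i < L + 1 then lam ⟨⟨i, hi⟩, p ⟨i, hi⟩⟩ else 0 with hg
    have hterm : ∀ l : Fin L,
        f ⟨l, (p l.castSucc, p l.succ)⟩ = g ((l : ℕ) + 1) - g (l : ℕ) := by
      intro l
      rw [hedge l (p l.castSucc) (p l.succ), hg]
      have h1 : (l : ℕ) + 1 < L + 1 := by omega
      have h2 : (l : ℕ) < L + 1 := by omega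
      simp only [dif_pos h1, dif_pos h2]
      rfl
    calc ∑ l : Fin L, f ⟨l, (p l.castSucc, p l.succ)⟩
        = ∑ l : Fin L, (g ((l : ℕ) + 1) - g (l : ℕ)) := by
          exact Finset.sum_congr rfl fun l _ => hterm l
      _ = ∑ i ∈ Finset.range L, (g (i + 1) - g i) := by
          rw [Fin.sum_univ_eq_sum_range (fun i => g (i + 1) - g i) L]
      _ = g L - g 0 := Finset.sum_range_sub g L
      _ = 0 := by
          rw [hg]
          simp only [dif_pos (by omega : L < L + 1), dif_pos (by omega : 0 < L + 1)]
          have e1 : lam ⟨⟨L, by omega⟩, p ⟨L, by omega⟩⟩ = lam ⟨Fin.last L, p (Fin.last L)⟩ := rfl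
          have e2 : lam ⟨⟨0, by omega⟩, p ⟨0, by omega⟩⟩ = lam ⟨0, p 0⟩ := rfl
          rw [e1, e2, hLst, h0]
          ring
end
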